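/- Let n ≥ 1, μ ∈ ℝⁿ, and Σ a positive definite symmetric real n×n matrix, and let ν = ν_{μ,Σ} be the corresponding Gaussian measure on ℝⁿ. With M(x) = −(1/2)Σ⁻¹ + (1/2)Σ⁻¹(x−μ)(x−μ)ᵀΣ⁻¹ and Y(x) = Σ⁻¹(x−μ), for all indices a, b, c, d, e one has ∫ Y(x)_a·M(x)_{bc}·M(x)_{de} dν(x) = 0. (This is the vanishing of the Amari–Chentsov component C_{μΣΣ} of the multivariate Gaussian family.) -/
import Mathlib


open MeasureTheory Matrix Real

/-- The Lebesgue density of the multivariate Gaussian distribution with mean `μ` and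
covariance matrix `S` on `ℝⁿ`. -/
noncomputable def mvGaussDensity {n : ℕ} (μ : Fin n → ℝ) (S : Matrix (Fin n) (Fin n) ℝ)
    (x : Fin n → ℝ) : ℝ :=
  (2 * π) ^ (-(n : ℝ) / 2) * S.det ^ (-(1 : ℝ) / 2) *
    Real.exp (-(1 / 2) * ((x - μ) ⬝ᵥ (S⁻¹ *ᵥ (x - μ))))

/-- The multivariate Gaussian measure `ν_{μ,Σ}` on `ℝⁿ`, given by its Lebesgue density. -/
noncomputable def mvGaussMeasure {n : ℕ} (μ : Fin n → ℝ) (S : Matrix (Fin n) (Fin n) ℝ) :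
    Measure (Fin n → ℝ) :=
  volume.withDensity fun x => ENNReal.ofReal (mvGaussDensity μ S x)

/-- The score of the multivariate Gaussian log-likelihood with respect to the covariance
parameter: M(x) = −(1/2)Σ⁻¹ + (1/2)Σ⁻¹(x−μ)(x−μ)ᵀΣ⁻¹. -/
noncomputable def mvScoreSigma {n : ℕ} (μ : Fin n → ℝ) (S : Matrix (Fin n) (Fin n) ℝ)
    (x : Fin n → ℝ) : Matrix (Fin n) (Fin n) ℝ :=
  (-(1 / 2) : ℝ) • S⁻¹ + ((1 / 2) : ℝ) • (S⁻¹ * Matrix.vecMulVec (x - μ) (x - μ) * S⁻¹)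

lemma mvGaussDensity_continuous {n : ℕ} (μ : Fin n → ℝ) (S : Matrix (Fin n) (Fin n) ℝ) :
    Continuous (mvGaussDensity μ S) := by
  unfold mvGaussDensity
  simp only [dotProduct, Matrix.mulVec]
  fun_prop

lemma mvGaussDensity_reflect {n : ℕ} (μ : Fin n → ℝ) (S : Matrix (Fin n) (Fin n) ℝ)
    (x : Fin n → ℝ) : mvGaussDensity μ S (μ + μ - x) = mvGaussDensity μ S x := by
  have h : (μ + μ - x) - μ = -(x - μ) := by abel
  unfold mvGaussDensity
  rw [h, Matrix.mulVec_neg, neg_dotProduct, dotProduct_neg, neg_neg]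

lemma mvScoreSigma_reflect {n : ℕ} (μ : Fin n → ℝ) (S : Matrix (Fin n) (Fin n) ℝ)
    (x : Fin n → ℝ) : mvScoreSigma μ S (μ + μ - x) = mvScoreSigma μ S x := by
  have h : (μ + μ - x) - μ = -(x - μ) := by abel
  have hv : Matrix.vecMulVec (-(x - μ)) (-(x - μ)) = Matrix.vecMulVec (x - μ) (x - μ) := by
    ext i j
    simp [Matrix.vecMulVec]
    ring
  unfold mvScoreSigma
  rw [h, hv]

/-- The Amari–Chentsov component C_{μΣΣ} of the multivariate Gaussian family vanishes:
with Y(x) = Σ⁻¹(x−μ), ∫ Y_a M_{bc} M_{de} dν = 0. -/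
theorem mvGaussian_AC_mu_Sigma_Sigma (n : ℕ) (hn : 1 ≤ n) (μ : Fin n → ℝ)
    (S : Matrix (Fin n) (Fin n) ℝ) (hS : S.PosDef) (hSsymm : S.IsSymm) (a b c d e : Fin n) :
    ∫ x, (S⁻¹ *ᵥ (x - μ)) a * mvScoreSigma μ S x b c * mvScoreSigma μ S x d e
        ∂(mvGaussMeasure μ S) = 0 := by
  set g : (Fin n → ℝ) → ℝ :=
    fun x => (S⁻¹ *ᵥ (x - μ)) a * mvScoreSigma μ S x b c * mvScoreSigma μ S x d e with hg
  have hfm : Measurable fun x => (mvGaussDensity μ S x).toNNReal := by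
    apply Measurable.real_toNNReal
    exact (mvGaussDensity_continuous μ S).measurable
  have hmeas : mvGaussMeasure μ S
      = volume.withDensity fun x => ((mvGaussDensity μ S x).toNNReal : ENNReal) := by
    unfold mvGaussMeasure
    congr 1
  have key : ∫ x, g x ∂(mvGaussMeasure μ S)
      = ∫ x, (mvGaussDensity μ S x).toNNReal • g x := by
    rw [hmeas, integral_withDensity_eq_integral_smul hfm]
  set F : (Fin n → ℝ) → ℝ := fun x => (mvGaussDensity μ S x).toNNReal • g x with hF
  have hrefl : ∀ x, F (μ + μ - x) = - F x := by
    intro x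
    have h : (μ + μ - x) - μ = -(x - μ) := by abel
    simp only [hF, hg, mvGaussDensity_reflect, mvScoreSigma_reflect, h,
      Matrix.mulVec_neg, Pi.neg_apply, NNReal.smul_def, smul_eq_mul]
    ring
  have hsub : ∫ x, F (μ + μ - x) = ∫ x, F x := integral_sub_left_eq_self F volume (μ + μ)
  have h2 : ∫ x, F (μ + μ - x) = - ∫ x, F x := by
    simp_rw [hrefl]
    rw [integral_neg]
  have hz : ∫ x, F x = 0 := by linarith
  rw [key]
  exact hz
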